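/- Let k be an algebraically closed field, S := k[y₁,…,yₙ], and M a nonzero S-module that is finite-dimensional over k. Then the set of maximal ideals m ⊆ S with M/mM ≠ 0 (the support of M) consists of exactly one element if and only if for every i the k-linear endomorphism of M given by multiplication by yᵢ has exactly one eigenvalue. -/

import Mathlib

open MvPolynomial

/-- for a nonzero finite degree module `M` over `S = k[y₁,…,yₙ]`, `k`
algebraically closed, the support of `M` (the set of maximal ideals `m` with `M/mM ≠ 0`)
is a single point iff for every `i` the multiplication by `yᵢ` on `M` has exactly one
eigenvalue. -/
theorem support_singleton_iff_unique_eigenvalues (k : Type*) [Field k] [IsAlgClosed k]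
    (n : ℕ) (M : Type*) [AddCommGroup M] [Module (MvPolynomial (Fin n) k) M]
    [Module k M] [IsScalarTower k (MvPolynomial (Fin n) k) M]
    [FiniteDimensional k M] [Nontrivial M] :
    (∃ m₀ : Ideal (MvPolynomial (Fin n) k),
        {m : Ideal (MvPolynomial (Fin n) k) |
          m.IsMaximal ∧ m • (⊤ : Submodule (MvPolynomial (Fin n) k) M) ≠ ⊤} = {m₀}) ↔
      ∀ i : Fin n, ∃ c₀ : k,
        {c : k | Module.End.HasEigenvalue
          (((LinearMap.lsmul (MvPolynomial (Fin n) k) M (X i))).restrictScalars k) c} =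
          {c₀} := by
  set S := MvPolynomial (Fin n) k
  haveI finS : Module.Finite S M := Module.Finite.of_restrictScalars_finite k S M
  set A := Module.annihilator S M with hA
  -- the annihilator is a proper ideal
  have hAne : A ≠ ⊤ := by
    intro h
    obtain ⟨x, y, hxy⟩ := exists_pair_ne M
    have h1 : (1 : S) ∈ A := h ▸ Submodule.mem_top
    rw [Module.mem_annihilator] at h1
    exact hxy (by rw [← one_smul S x, h1 x, ← one_smul S y, h1 y])
  have vanishingIdeal_singleton_isMaximal :
      ∀ {a : Fin n → k}, (vanishingIdeal k {a} : Ideal S).IsMaximal := inferInstance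
  -- membership of `X i - C (a i)` in the vanishing ideal
  have memX : ∀ (a : Fin n → k) (i : Fin n),
      X i - C (a i) ∈ (vanishingIdeal k {a} : Ideal S) := by
    intro a i
    rw [mem_vanishingIdeal_singleton_iff]
    simp
  -- injectivity of `a ↦ vanishingIdeal k {a}`
  have inj : ∀ a b : Fin n → k,
      (vanishingIdeal k {a} : Ideal S) = vanishingIdeal k {b} → a = b := by
    intro a b hab
    funext i
    have h := memX a i
    rw [hab, mem_vanishingIdeal_singleton_iff] at h
    simp only [map_sub, aeval_X, aeval_C, Algebra.algebraMap_self, RingHom.id_apply, sub_eq_zero] at h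
    exact h.symm
  -- Key lemma 1: for a maximal ideal `m`, `m • ⊤ ≠ ⊤ ↔ A ≤ m`
  have key1 : ∀ m : Ideal S, m.IsMaximal → (m • (⊤ : Submodule S M) ≠ ⊤ ↔ A ≤ m) := by
    intro m hm
    constructor
    · intro hne
      by_contra hAm
      obtain ⟨s, hsA, hsm⟩ := Set.not_subset.mp hAm
      obtain ⟨y, i, him, hyi⟩ := hm.exists_inv hsm
      apply hne
      rw [eq_top_iff]
      intro x _
      have hx : x = i • x := by
        have : (y * s + i) • x = (1 : S) • x := by rw [hyi]
        rw [add_smul, one_smul] at this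
        have hs0 : s • x = 0 := Module.mem_annihilator.mp hsA x
        rw [mul_smul, hs0, smul_zero, zero_add] at this
        exact this.symm
      rw [hx]
      exact Submodule.smul_mem_smul him Submodule.mem_top
    · intro hAm heq
      obtain ⟨r, hr1, hr0⟩ :=
        Submodule.exists_sub_one_mem_and_smul_eq_zero_of_fg_of_le_smul m
          (⊤ : Submodule S M) (Module.finite_def.mp finS) heq.ge
      have hrA : r ∈ A := Module.mem_annihilator.mpr fun x => hr0 x Submodule.mem_top
      have h1 : (1 : S) ∈ m := by
        have := m.sub_mem (hAm hrA) hr1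
        simpa using this
      exact hm.ne_top ((Ideal.eq_top_iff_one m).mpr h1)
  -- Key lemma 2b: if `A ≤ vanishingIdeal k {a}` then `a i` is an eigenvalue of `X i`
  have key2b : ∀ (a : Fin n → k), A ≤ (vanishingIdeal k {a} : Ideal S) → ∀ i : Fin n,
      Module.End.HasEigenvalue
        (((LinearMap.lsmul S M (X i))).restrictScalars k) (a i) := by
    intro a hAa i
    have hne : (vanishingIdeal k {a} : Ideal S) • (⊤ : Submodule S M) ≠ ⊤ :=
      (key1 _ vanishingIdeal_singleton_isMaximal).mpr hAa
    rw [Module.End.hasEigenvalue_iff, Module.End.eigenspace_def]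
    intro hker
    have hinj := LinearMap.ker_eq_bot.mp hker
    have hsurj := LinearMap.injective_iff_surjective.mp hinj
    apply hne
    rw [eq_top_iff]
    intro x _
    obtain ⟨y, hy⟩ := hsurj x
    have hval : (X i - C (a i)) • y = x := by
      rw [sub_smul, ← hy]
      simp only [LinearMap.sub_apply, LinearMap.coe_restrictScalars,
        LinearMap.lsmul_apply, LinearMap.smul_apply, Module.End.one_apply]
      congr 1
      rw [← algebraMap_smul S (a i) y]
      rfl
    rw [← hval]
    exact Submodule.smul_mem_smul (memX a i) Submodule.mem_top
  -- Key lemma 2a: every eigenvalue of `X i` comes from a point in the support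
  have key2a : ∀ (i : Fin n) (c : k),
      Module.End.HasEigenvalue
        (((LinearMap.lsmul S M (X i))).restrictScalars k) c →
      ∃ a : Fin n → k, a i = c ∧ A ≤ (vanishingIdeal k {a} : Ideal S) := by
    intro i c hc
    rw [Module.End.hasEigenvalue_iff, Module.End.eigenspace_def] at hc
    obtain ⟨x, hx, hx0⟩ := Submodule.exists_mem_ne_zero_of_ne_bot hc
    have hx' : (X i - C c) • x = 0 := by
      have h1 : (X i : S) • x = c • x := by
        have h := LinearMap.mem_ker.mp hx
        simpa only [LinearMap.sub_apply, LinearMap.coe_restrictScalars,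
          LinearMap.lsmul_apply, LinearMap.smul_apply, Module.End.one_apply,
          sub_eq_zero] using h
      rw [sub_smul, h1, ← algebraMap_smul S c x, algebraMap_eq, sub_self]
    set N : Submodule S M := LinearMap.ker (LinearMap.lsmul S M (X i - C c)) with hN
    have hxN : x ∈ N := LinearMap.mem_ker.mpr (by rw [LinearMap.lsmul_apply]; exact hx')
    have hNann : N.annihilator ≠ ⊤ := by
      intro h
      have h1 : (1 : S) ∈ N.annihilator := h ▸ Submodule.mem_top
      have := Submodule.mem_annihilator.mp h1 x hxN
      rw [one_smul] at this
      exact hx0 this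
    obtain ⟨m, hmax, hle⟩ := Ideal.exists_le_maximal _ hNann
    obtain ⟨a, rfl⟩ := (isMaximal_iff_eq_vanishingIdeal_singleton (I := m)).mp hmax
    refine ⟨a, ?_, ?_⟩
    · have hmem : X i - C c ∈ (vanishingIdeal k {a} : Ideal S) := by
        apply hle
        rw [Submodule.mem_annihilator]
        intro n hn
        have := LinearMap.mem_ker.mp hn
        rwa [LinearMap.lsmul_apply] at this
      rw [mem_vanishingIdeal_singleton_iff] at hmem
      simpa [sub_eq_zero] using hmem
    · refine le_trans ?_ hle
      intro s hs
      rw [Submodule.mem_annihilator]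
      intro m' _
      exact Module.mem_annihilator.mp hs m'
  -- get a point in the support
  obtain ⟨mm, hmmax, hAmm⟩ := Ideal.exists_le_maximal A hAne
  obtain ⟨a₀, rfl⟩ := (isMaximal_iff_eq_vanishingIdeal_singleton (I := mm)).mp hmmax
  have ha₀ : (vanishingIdeal k {a₀} : Ideal S) ∈
      {m : Ideal S | m.IsMaximal ∧ m • (⊤ : Submodule S M) ≠ ⊤} :=
    ⟨vanishingIdeal_singleton_isMaximal, (key1 _ vanishingIdeal_singleton_isMaximal).mpr hAmm⟩
  constructor
  · rintro ⟨m₀, hm₀⟩ i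
    have hm₀a₀ : (vanishingIdeal k {a₀} : Ideal S) = m₀ := by
      rw [hm₀] at ha₀; exact ha₀
    refine ⟨a₀ i, Set.eq_singleton_iff_unique_mem.mpr ⟨key2b a₀ hAmm i, ?_⟩⟩
    intro c hc
    obtain ⟨a, rfl, hAa⟩ := key2a i c hc
    have hamem : (vanishingIdeal k {a} : Ideal S) ∈ ({m₀} : Set (Ideal S)) := by
      rw [← hm₀]
      exact ⟨vanishingIdeal_singleton_isMaximal,
        (key1 _ vanishingIdeal_singleton_isMaximal).mpr hAa⟩
    have : a = a₀ := inj a a₀ (by rw [Set.mem_singleton_iff.mp hamem, hm₀a₀])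
    rw [this]
  · intro h
    choose c₀ hc₀ using h
    have ha₀c : a₀ = c₀ := by
      funext i
      have := key2b a₀ hAmm i
      have hmem : a₀ i ∈ {c : k | Module.End.HasEigenvalue
          (((LinearMap.lsmul S M (X i))).restrictScalars k) c} := this
      rw [hc₀ i] at hmem
      exact hmem
    refine ⟨vanishingIdeal k {a₀}, ?_⟩
    apply Set.eq_singleton_iff_unique_mem.mpr ⟨ha₀, ?_⟩
    rintro m ⟨hmax, hne⟩
    obtain ⟨a, rfl⟩ := (isMaximal_iff_eq_vanishingIdeal_singleton (I := m)).mp hmax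
    have hAa : A ≤ vanishingIdeal k {a} :=
      (key1 _ vanishingIdeal_singleton_isMaximal).mp hne
    have : a = c₀ := by
      funext i
      have := key2b a hAa i
      have hmem : a i ∈ {c : k | Module.End.HasEigenvalue
          (((LinearMap.lsmul S M (X i))).restrictScalars k) c} := this
      rw [hc₀ i] at hmem
      exact hmem
    rw [this, ← ha₀c]
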